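/- Let F be a unitary N=(2,2) full vertex operator superalgebra and v ∈ F_{h,h̄}^α nonzero. Then v is a chiral-chiral primary vector (i.e., a lowest weight vector annihilated by G_{-1/2}^+ and Ḡ_{-1/2}^+) if and only if h = (α,J)_l/2 and h̄ = (α,J̄)_r/2. -/
import Mathlib


open scoped ComplexInnerProductSpace

/-!
A unitary N=(2,2) full vertex operator superalgebra is encoded here by a complex inner
product space `F` (the positive-definite Hermitian form of the unitary structure)
together with the mode operators `L(n), L̄(n), J(n), J̄(n)` and the supersymmetric
currents `G_r^± , Ḡ_r^±`, subject to the adjoint (unitarity) relations, the N=(2,2)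
superconformal bracket relations, and the grading properties.  The graded subspace
`F_{h,h̄}^α` is the simultaneous eigenspace of `L(0), L̄(0), J(0), J̄(0)` with
eigenvalues `h, h̄, (α,J)_l, (α,J̄)_r`.
-/


private lemma eig_brk {F : Type*} [AddCommGroup F] [Module ℂ F]
    (A X : F →ₗ[ℂ] F) (a s : ℂ) (v : F)
    (hc : A ∘ₗ X - X ∘ₗ A = s • X) (hv : A v = a • v) :
    A (X v) = (a + s) • X v := by
  have hh := LinearMap.congr_fun hc v
  simp only [LinearMap.sub_apply, LinearMap.comp_apply, LinearMap.smul_apply] at hh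
  rw [hv, map_smul] at hh
  rw [sub_eq_iff_eq_add] at hh
  rw [hh, add_smul]
  exact add_comm _ _

private lemma eig_swap {F : Type*} [AddCommGroup F] [Module ℂ F]
    (A X : F →ₗ[ℂ] F) (a : ℂ) (v : F)
    (hc : A ∘ₗ X = X ∘ₗ A) (hv : A v = a • v) :
    A (X v) = a • X v := by
  have hh := LinearMap.congr_fun hc v
  simp only [LinearMap.comp_apply] at hh
  rw [hh, hv, map_smul]

private lemma norm_sq_sum_zero {E : Type*} [NormedAddCommGroup E] {a b : E}
    (h : ‖a‖ ^ 2 + ‖b‖ ^ 2 = 0) : a = 0 ∧ b = 0 := by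
  have h1 : ‖a‖ ^ 2 = 0 := by nlinarith [sq_nonneg ‖a‖, sq_nonneg ‖b‖]
  have h2 : ‖b‖ ^ 2 = 0 := by nlinarith [sq_nonneg ‖a‖, sq_nonneg ‖b‖]
  exact ⟨norm_eq_zero.mp (sq_eq_zero_iff.mp h1), norm_eq_zero.mp (sq_eq_zero_iff.mp h2)⟩

/-- A nonzero `v ∈ F_{h,h̄}^α` is a chiral-chiral primary vector
(a lowest weight vector annihilated additionally by `G_{-1/2}^+` and `Ḡ_{-1/2}^+`)
if and only if `h = (α,J)_l/2` and `h̄ = (α,J̄)_r/2`. -/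
theorem prop_NS_cc_primary
    {F : Type*} [NormedAddCommGroup F] [InnerProductSpace ℂ F]
    (c cb : ℝ)
    (L Lb J Jb Gp Gm Gpb Gmb : ℝ → F →ₗ[ℂ] F)
    -- adjoint relations coming from unitarity
    (adjL : ∀ (n : ℝ) (u v : F), ⟪u, L n v⟫ = ⟪L (-n) u, v⟫)
    (adjLb : ∀ (n : ℝ) (u v : F), ⟪u, Lb n v⟫ = ⟪Lb (-n) u, v⟫)
    (adjJ : ∀ (n : ℝ) (u v : F), ⟪u, J n v⟫ = ⟪J (-n) u, v⟫)
    (adjJb : ∀ (n : ℝ) (u v : F), ⟪u, Jb n v⟫ = ⟪Jb (-n) u, v⟫)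
    (adjGp : ∀ (r : ℝ) (u v : F), ⟪u, Gp r v⟫ = ⟪Gm (-r) u, v⟫)
    (adjGm : ∀ (r : ℝ) (u v : F), ⟪u, Gm r v⟫ = ⟪Gp (-r) u, v⟫)
    (adjGpb : ∀ (r : ℝ) (u v : F), ⟪u, Gpb r v⟫ = ⟪Gmb (-r) u, v⟫)
    (adjGmb : ∀ (r : ℝ) (u v : F), ⟪u, Gmb r v⟫ = ⟪Gpb (-r) u, v⟫)
    -- N=2 superconformal anticommutators (chiral and anti-chiral)
    (brk : ∀ r s : ℝ, Gp r ∘ₗ Gm s + Gm s ∘ₗ Gp r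
        = L (r + s) + (((r - s) / 2 : ℝ) : ℂ) • J (r + s)
          + (if r + s = 0 then ((c / 6 * (r ^ 2 - 1 / 4) : ℝ) : ℂ) else 0)
              • (LinearMap.id : F →ₗ[ℂ] F))
    (brkb : ∀ r s : ℝ, Gpb r ∘ₗ Gmb s + Gmb s ∘ₗ Gpb r
        = Lb (r + s) + (((r - s) / 2 : ℝ) : ℂ) • Jb (r + s)
          + (if r + s = 0 then ((cb / 6 * (r ^ 2 - 1 / 4) : ℝ) : ℂ) else 0)
              • (LinearMap.id : F →ₗ[ℂ] F))
    (brkGpGp : ∀ r s : ℝ, Gp r ∘ₗ Gp s + Gp s ∘ₗ Gp r = 0)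
    (brkGmGm : ∀ r s : ℝ, Gm r ∘ₗ Gm s + Gm s ∘ₗ Gm r = 0)
    (brkGpGpb : ∀ r s : ℝ, Gpb r ∘ₗ Gpb s + Gpb s ∘ₗ Gpb r = 0)
    (brkGmGmb : ∀ r s : ℝ, Gmb r ∘ₗ Gmb s + Gmb s ∘ₗ Gmb r = 0)
    -- commutators of the Virasoro/R-symmetry modes with the supercurrents
    (commLG : ∀ (n r : ℝ), L n ∘ₗ Gp r - Gp r ∘ₗ L n = ((n / 2 - r : ℝ) : ℂ) • Gp (r + n))
    (commLGm : ∀ (n r : ℝ), L n ∘ₗ Gm r - Gm r ∘ₗ L n = ((n / 2 - r : ℝ) : ℂ) • Gm (r + n))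
    (commJG : ∀ (n r : ℝ), J n ∘ₗ Gp r - Gp r ∘ₗ J n = Gp (r + n))
    (commJGm : ∀ (n r : ℝ), J n ∘ₗ Gm r - Gm r ∘ₗ J n = -Gm (r + n))
    (commLGb : ∀ (n r : ℝ), Lb n ∘ₗ Gpb r - Gpb r ∘ₗ Lb n = ((n / 2 - r : ℝ) : ℂ) • Gpb (r + n))
    (commLGmb : ∀ (n r : ℝ), Lb n ∘ₗ Gmb r - Gmb r ∘ₗ Lb n = ((n / 2 - r : ℝ) : ℂ) • Gmb (r + n))
    (commJGb : ∀ (n r : ℝ), Jb n ∘ₗ Gpb r - Gpb r ∘ₗ Jb n = Gpb (r + n))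
    (commJGmb : ∀ (n r : ℝ), Jb n ∘ₗ Gmb r - Gmb r ∘ₗ Jb n = -Gmb (r + n))
    -- Virasoro and R-symmetry commutators with the zero modes
    (commLL : ∀ n : ℝ, L 0 ∘ₗ L n - L n ∘ₗ L 0 = (-(n : ℂ)) • L n)
    (commLJ : ∀ n : ℝ, L 0 ∘ₗ J n - J n ∘ₗ L 0 = (-(n : ℂ)) • J n)
    (commJL : ∀ n : ℝ, J 0 ∘ₗ L n = L n ∘ₗ J 0)
    (commJJ : ∀ n : ℝ, J 0 ∘ₗ J n = J n ∘ₗ J 0)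
    (commLLb : ∀ n : ℝ, Lb 0 ∘ₗ Lb n - Lb n ∘ₗ Lb 0 = (-(n : ℂ)) • Lb n)
    (commLJb : ∀ n : ℝ, Lb 0 ∘ₗ Jb n - Jb n ∘ₗ Lb 0 = (-(n : ℂ)) • Jb n)
    (commJLb : ∀ n : ℝ, Jb 0 ∘ₗ Lb n = Lb n ∘ₗ Jb 0)
    (commJJb : ∀ n : ℝ, Jb 0 ∘ₗ Jb n = Jb n ∘ₗ Jb 0)
    -- the chiral and anti-chiral halves commute
    (cross1 : ∀ (n r : ℝ), Lb n ∘ₗ Gp r = Gp r ∘ₗ Lb n)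
    (cross2 : ∀ (n r : ℝ), Jb n ∘ₗ Gp r = Gp r ∘ₗ Jb n)
    (cross3 : ∀ (n r : ℝ), Lb n ∘ₗ Gm r = Gm r ∘ₗ Lb n)
    (cross4 : ∀ (n r : ℝ), Jb n ∘ₗ Gm r = Gm r ∘ₗ Jb n)
    (cross5 : ∀ (n r : ℝ), L n ∘ₗ Gpb r = Gpb r ∘ₗ L n)
    (cross6 : ∀ (n r : ℝ), J n ∘ₗ Gpb r = Gpb r ∘ₗ J n)
    (cross7 : ∀ (n r : ℝ), L n ∘ₗ Gmb r = Gmb r ∘ₗ L n)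
    (cross8 : ∀ (n r : ℝ), J n ∘ₗ Gmb r = Gmb r ∘ₗ J n)
    (cross9 : ∀ n m : ℝ, L n ∘ₗ Lb m = Lb m ∘ₗ L n)
    (cross10 : ∀ n m : ℝ, L n ∘ₗ Jb m = Jb m ∘ₗ L n)
    (cross11 : ∀ n m : ℝ, J n ∘ₗ Lb m = Lb m ∘ₗ J n)
    (cross12 : ∀ n m : ℝ, J n ∘ₗ Jb m = Jb m ∘ₗ J n)
    -- the supercurrent modes are supported on half-integers
    (hhalf : ∀ r : ℝ, (¬ ∃ k : ℤ, r = (k : ℝ) + 1 / 2) →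
        Gp r = 0 ∧ Gm r = 0 ∧ Gpb r = 0 ∧ Gmb r = 0)
    -- conformal weights are bounded below (FO3)
    (N : ℝ)
    (hbound : ∀ (w : F) (h hb jl jr : ℝ), w ≠ 0 →
        L 0 w = (h : ℂ) • w → Lb 0 w = (hb : ℂ) • w →
        J 0 w = (jl : ℂ) • w → Jb 0 w = (jr : ℂ) • w → N ≤ h ∧ N ≤ hb)
    -- the weight inequality for nonzero graded vectors (Lemma: h ≥ (α,J)_l/2 etc.)
    (hineq : ∀ (w : F) (h' hb' jl' jr' : ℝ), w ≠ 0 →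
        L 0 w = (h' : ℂ) • w → Lb 0 w = (hb' : ℂ) • w →
        J 0 w = (jl' : ℂ) • w → Jb 0 w = (jr' : ℂ) • w → jl' / 2 ≤ h' ∧ jr' / 2 ≤ hb')
    -- a nonzero vector `v ∈ F_{h,h̄}^α`, with `jl = (α,J)_l` and `jr = (α,J̄)_r`
    (h hb jl jr : ℝ) (v : F) (hv : v ≠ 0)
    (hL0 : L 0 v = (h : ℂ) • v) (hLb0 : Lb 0 v = (hb : ℂ) • v)
    (hJ0 : J 0 v = (jl : ℂ) • v) (hJb0 : Jb 0 v = (jr : ℂ) • v) :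
    ((∀ n : ℝ, 1 ≤ n → L n v = 0 ∧ Lb n v = 0 ∧ J n v = 0 ∧ Jb n v = 0)
      ∧ (∀ r : ℝ, (1 : ℝ) / 2 ≤ r → Gp r v = 0 ∧ Gm r v = 0 ∧ Gpb r v = 0 ∧ Gmb r v = 0)
      ∧ Gp (-(1 / 2)) v = 0 ∧ Gpb (-(1 / 2)) v = 0)
    ↔ (h = jl / 2 ∧ hb = jr / 2) := by

  -- the basic anticommutator at r = -1/2, s = 1/2
  have brk0 : ∀ x : F, Gp (-(1/2)) (Gm (1/2) x) + Gm (1/2) (Gp (-(1/2)) x)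
      = L 0 x + (-(1/2) : ℂ) • J 0 x := by
    intro x
    have hb := LinearMap.congr_fun (brk (-(1/2)) (1/2)) x
    simp only [LinearMap.add_apply, LinearMap.comp_apply, LinearMap.smul_apply,
      LinearMap.id_apply] at hb
    norm_num at hb
    rw [hb]; module
  have brkb0 : ∀ x : F, Gpb (-(1/2)) (Gmb (1/2) x) + Gmb (1/2) (Gpb (-(1/2)) x)
      = Lb 0 x + (-(1/2) : ℂ) • Jb 0 x := by
    intro x
    have hb := LinearMap.congr_fun (brkb (-(1/2)) (1/2)) x
    simp only [LinearMap.add_apply, LinearMap.comp_apply, LinearMap.smul_apply,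
      LinearMap.id_apply] at hb
    norm_num at hb
    rw [hb]; module
  constructor
  · rintro ⟨hLw, hGw, hGpv, hGpbv⟩
    have hGm : Gm (1/2) v = 0 := (hGw (1/2) le_rfl).2.1
    have hGmb : Gmb (1/2) v = 0 := (hGw (1/2) le_rfl).2.2.2
    have h1 := brk0 v
    rw [hGm, hGpv, map_zero, map_zero, hL0, hJ0] at h1
    have h2 := brkb0 v
    rw [hGmb, hGpbv, map_zero, map_zero, hLb0, hJb0] at h2
    have hs1 : ((h - jl/2 : ℝ) : ℂ) • v = 0 := by
      have e : (h : ℂ) • v + (-(1/2) : ℂ) • ((jl : ℝ) : ℂ) • v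
          = ((h - jl/2 : ℝ) : ℂ) • v := by push_cast; module
      rw [← e, ← h1]; simp
    have hs2 : ((hb - jr/2 : ℝ) : ℂ) • v = 0 := by
      have e : (hb : ℂ) • v + (-(1/2) : ℂ) • ((jr : ℝ) : ℂ) • v
          = ((hb - jr/2 : ℝ) : ℂ) • v := by push_cast; module
      rw [← e, ← h2]; simp
    have hz1 : ((h - jl/2 : ℝ) : ℂ) = 0 := by
      rcases smul_eq_zero.mp hs1 with hz | hz
      · exact hz
      · exact absurd hz hv
    have hz2 : ((hb - jr/2 : ℝ) : ℂ) = 0 := by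
      rcases smul_eq_zero.mp hs2 with hz | hz
      · exact hz
      · exact absurd hz hv
    have r1 : h - jl/2 = 0 := by exact_mod_cast hz1
    have r2 : hb - jr/2 = 0 := by exact_mod_cast hz2
    constructor <;> linarith
  · rintro ⟨hh, hhb⟩
    subst hh; subst hhb
    -- kill lemma
    have kill : ∀ (w : F) (h' hb' jl' jr' : ℝ),
        L 0 w = ((h' : ℝ) : ℂ) • w → Lb 0 w = ((hb' : ℝ) : ℂ) • w →
        J 0 w = ((jl' : ℝ) : ℂ) • w → Jb 0 w = ((jr' : ℝ) : ℂ) • w →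
        (h' < jl' / 2 ∨ hb' < jr' / 2) → w = 0 := by
      intro w h' hb' jl' jr' e1 e2 e3 e4 hc
      by_contra hw
      obtain ⟨i1, i2⟩ := hineq w h' hb' jl' jr' hw e1 e2 e3 e4
      rcases hc with hc | hc <;> linarith
    have hLn : ∀ n : ℝ, 1 ≤ n → L n v = 0 := by
      intro n hn
      refine kill (L n v) (jl/2 - n) (jr/2) jl jr ?_ ?_ ?_ ?_ (Or.inl (by linarith))
      · have e := eig_brk (L 0) (L n) ((jl/2 : ℝ) : ℂ) (-(n : ℂ)) v (commLL n) hL0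
        rw [e]; congr 1; push_cast; ring
      · exact eig_swap _ _ _ _ (cross9 n 0).symm hLb0
      · exact eig_swap _ _ _ _ (commJL n) hJ0
      · exact eig_swap _ _ _ _ (cross10 n 0).symm hJb0
    have hLbn : ∀ n : ℝ, 1 ≤ n → Lb n v = 0 := by
      intro n hn
      refine kill (Lb n v) (jl/2) (jr/2 - n) jl jr ?_ ?_ ?_ ?_ (Or.inr (by linarith))
      · exact eig_swap _ _ _ _ (cross9 0 n) hL0
      · have e := eig_brk (Lb 0) (Lb n) ((jr/2 : ℝ) : ℂ) (-(n : ℂ)) v (commLLb n) hLb0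
        rw [e]; congr 1; push_cast; ring
      · exact eig_swap _ _ _ _ (cross11 0 n) hJ0
      · exact eig_swap _ _ _ _ (commJLb n) hJb0
    have hJn : ∀ n : ℝ, 1 ≤ n → J n v = 0 := by
      intro n hn
      refine kill (J n v) (jl/2 - n) (jr/2) jl jr ?_ ?_ ?_ ?_ (Or.inl (by linarith))
      · have e := eig_brk (L 0) (J n) ((jl/2 : ℝ) : ℂ) (-(n : ℂ)) v (commLJ n) hL0
        rw [e]; congr 1; push_cast; ring
      · exact eig_swap _ _ _ _ (cross11 n 0).symm hLb0
      · exact eig_swap _ _ _ _ (commJJ n) hJ0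
      · exact eig_swap _ _ _ _ (cross12 n 0).symm hJb0
    have hJbn : ∀ n : ℝ, 1 ≤ n → Jb n v = 0 := by
      intro n hn
      refine kill (Jb n v) (jl/2) (jr/2 - n) jl jr ?_ ?_ ?_ ?_ (Or.inr (by linarith))
      · exact eig_swap _ _ _ _ (cross10 0 n) hL0
      · have e := eig_brk (Lb 0) (Jb n) ((jr/2 : ℝ) : ℂ) (-(n : ℂ)) v (commLJb n) hLb0
        rw [e]; congr 1; push_cast; ring
      · exact eig_swap _ _ _ _ (cross12 0 n) hJ0
      · exact eig_swap _ _ _ _ (commJJb n) hJb0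
    have hGpr : ∀ r : ℝ, -(1/2) < r → Gp r v = 0 := by
      intro r hr
      have hcL : L 0 ∘ₗ Gp r - Gp r ∘ₗ L 0 = (-(r : ℂ)) • Gp r := by
        have := commLG 0 r
        rw [add_zero] at this
        rw [this]; congr 1; push_cast; ring
      have hcJ : J 0 ∘ₗ Gp r - Gp r ∘ₗ J 0 = (1 : ℂ) • Gp r := by
        rw [commJG 0 r, add_zero, one_smul]
      refine kill (Gp r v) (jl/2 - r) (jr/2) (jl + 1) jr ?_ ?_ ?_ ?_
        (Or.inl (by linarith))
      · have e := eig_brk (L 0) (Gp r) ((jl/2 : ℝ) : ℂ) (-(r : ℂ)) v hcL hL0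
        rw [e]; congr 1; push_cast; ring
      · exact eig_swap _ _ _ _ (cross1 0 r) hLb0
      · have e := eig_brk (J 0) (Gp r) ((jl : ℝ) : ℂ) (1 : ℂ) v hcJ hJ0
        rw [e]; congr 1; push_cast; ring
      · exact eig_swap _ _ _ _ (cross2 0 r) hJb0
    have hGmr : ∀ r : ℝ, 1/2 < r → Gm r v = 0 := by
      intro r hr
      have hcL : L 0 ∘ₗ Gm r - Gm r ∘ₗ L 0 = (-(r : ℂ)) • Gm r := by
        have := commLGm 0 r
        rw [add_zero] at this
        rw [this]; congr 1; push_cast; ring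
      have hcJ : J 0 ∘ₗ Gm r - Gm r ∘ₗ J 0 = (-1 : ℂ) • Gm r := by
        rw [commJGm 0 r, add_zero]
        exact (neg_one_smul ℂ (Gm r)).symm
      refine kill (Gm r v) (jl/2 - r) (jr/2) (jl - 1) jr ?_ ?_ ?_ ?_
        (Or.inl (by linarith))
      · have e := eig_brk (L 0) (Gm r) ((jl/2 : ℝ) : ℂ) (-(r : ℂ)) v hcL hL0
        rw [e]; congr 1; push_cast; ring
      · exact eig_swap _ _ _ _ (cross3 0 r) hLb0
      · have e := eig_brk (J 0) (Gm r) ((jl : ℝ) : ℂ) (-1 : ℂ) v hcJ hJ0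
        rw [e]; congr 1; push_cast; ring
      · exact eig_swap _ _ _ _ (cross4 0 r) hJb0
    have hGpbr : ∀ r : ℝ, -(1/2) < r → Gpb r v = 0 := by
      intro r hr
      have hcL : Lb 0 ∘ₗ Gpb r - Gpb r ∘ₗ Lb 0 = (-(r : ℂ)) • Gpb r := by
        have := commLGb 0 r
        rw [add_zero] at this
        rw [this]; congr 1; push_cast; ring
      have hcJ : Jb 0 ∘ₗ Gpb r - Gpb r ∘ₗ Jb 0 = (1 : ℂ) • Gpb r := by
        rw [commJGb 0 r, add_zero, one_smul]
      refine kill (Gpb r v) (jl/2) (jr/2 - r) jl (jr + 1) ?_ ?_ ?_ ?_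
        (Or.inr (by linarith))
      · exact eig_swap _ _ _ _ (cross5 0 r) hL0
      · have e := eig_brk (Lb 0) (Gpb r) ((jr/2 : ℝ) : ℂ) (-(r : ℂ)) v hcL hLb0
        rw [e]; congr 1; push_cast; ring
      · exact eig_swap _ _ _ _ (cross6 0 r) hJ0
      · have e := eig_brk (Jb 0) (Gpb r) ((jr : ℝ) : ℂ) (1 : ℂ) v hcJ hJb0
        rw [e]; congr 1; push_cast; ring
    have hGmbr : ∀ r : ℝ, 1/2 < r → Gmb r v = 0 := by
      intro r hr
      have hcL : Lb 0 ∘ₗ Gmb r - Gmb r ∘ₗ Lb 0 = (-(r : ℂ)) • Gmb r := by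
        have := commLGmb 0 r
        rw [add_zero] at this
        rw [this]; congr 1; push_cast; ring
      have hcJ : Jb 0 ∘ₗ Gmb r - Gmb r ∘ₗ Jb 0 = (-1 : ℂ) • Gmb r := by
        rw [commJGmb 0 r, add_zero]
        exact (neg_one_smul ℂ (Gmb r)).symm
      refine kill (Gmb r v) (jl/2) (jr/2 - r) jl (jr - 1) ?_ ?_ ?_ ?_
        (Or.inr (by linarith))
      · exact eig_swap _ _ _ _ (cross7 0 r) hL0
      · have e := eig_brk (Lb 0) (Gmb r) ((jr/2 : ℝ) : ℂ) (-(r : ℂ)) v hcL hLb0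
        rw [e]; congr 1; push_cast; ring
      · exact eig_swap _ _ _ _ (cross8 0 r) hJ0
      · have e := eig_brk (Jb 0) (Gmb r) ((jr : ℝ) : ℂ) (-1 : ℂ) v hcJ hJb0
        rw [e]; congr 1; push_cast; ring
    -- positivity argument for Gm(1/2) and Gp(-1/2)
    have hsum : Gp (-(1/2)) (Gm (1/2) v) + Gm (1/2) (Gp (-(1/2)) v) = 0 := by
      rw [brk0 v, hL0, hJ0]
      push_cast
      module
    have hsumb : Gpb (-(1/2)) (Gmb (1/2) v) + Gmb (1/2) (Gpb (-(1/2)) v) = 0 := by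
      rw [brkb0 v, hLb0, hJb0]
      push_cast
      module
    have hkey : ‖Gm (1/2) v‖^2 + ‖Gp (-(1/2)) v‖^2 = 0 := by
      have e1 := adjGm (1/2) (Gm (1/2) v) v
      have e2 := adjGp (-(1/2)) (Gp (-(1/2)) v) v
      rw [neg_neg] at e2
      have e3 : (⟪Gm (1/2) v, Gm (1/2) v⟫ : ℂ) + ⟪Gp (-(1/2)) v, Gp (-(1/2)) v⟫
          = 0 := by
        rw [e1, e2, ← inner_add_left, hsum, inner_zero_left]
      rw [inner_self_eq_norm_sq_to_K, inner_self_eq_norm_sq_to_K] at e3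
      have e4 : ((‖Gm (1/2) v‖^2 + ‖Gp (-(1/2)) v‖^2 : ℝ) : ℂ) = 0 := by
        push_cast; exact e3
      exact Complex.ofReal_eq_zero.mp e4
    have hkeyb : ‖Gmb (1/2) v‖^2 + ‖Gpb (-(1/2)) v‖^2 = 0 := by
      have e1 := adjGmb (1/2) (Gmb (1/2) v) v
      have e2 := adjGpb (-(1/2)) (Gpb (-(1/2)) v) v
      rw [neg_neg] at e2
      have e3 : (⟪Gmb (1/2) v, Gmb (1/2) v⟫ : ℂ) + ⟪Gpb (-(1/2)) v, Gpb (-(1/2)) v⟫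
          = 0 := by
        rw [e1, e2, ← inner_add_left, hsumb, inner_zero_left]
      rw [inner_self_eq_norm_sq_to_K, inner_self_eq_norm_sq_to_K] at e3
      have e4 : ((‖Gmb (1/2) v‖^2 + ‖Gpb (-(1/2)) v‖^2 : ℝ) : ℂ) = 0 := by
        push_cast; exact e3
      exact Complex.ofReal_eq_zero.mp e4
    have hGm12 : Gm (1/2) v = 0 := norm_sq_sum_zero hkey |>.1
    have hGpm12 : Gp (-(1/2)) v = 0 := norm_sq_sum_zero hkey |>.2
    have hGmb12 : Gmb (1/2) v = 0 := norm_sq_sum_zero hkeyb |>.1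
    have hGpbm12 : Gpb (-(1/2)) v = 0 := norm_sq_sum_zero hkeyb |>.2
    have hGpbm12 : Gpb (-(1/2)) v = 0 := by
      rw [← norm_eq_zero]
      nlinarith [norm_nonneg (Gmb (1/2) v), norm_nonneg (Gpb (-(1/2)) v),
        sq_nonneg ‖Gmb (1/2) v‖, sq_nonneg ‖Gpb (-(1/2)) v‖]
    refine ⟨fun n hn => ⟨hLn n hn, hLbn n hn, hJn n hn, hJbn n hn⟩,
      fun r hr => ⟨hGpr r (by linarith), ?_, hGpbr r (by linarith), ?_⟩,
      hGpm12, hGpbm12⟩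
    · rcases eq_or_lt_of_le hr with he | hl
      · rw [← he]; exact hGm12
      · exact hGmr r hl
    · rcases eq_or_lt_of_le hr with he | hl
      · rw [← he]; exact hGmb12
      · exact hGmbr r hl
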